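/- Let f : F_2^n × F_2^n → F_2 be the bilinear form f(x,y) = xᵀAy for A ∈ F_2^{n×n}, and let r(x,y) = ρ₁(x) ∧ ρ₂(y) be a rectangle whose partition separates the x-variables from the y-variables. Then Disc(f, r) ≤ 2^{−rank(A)/2}. -/

import Mathlib

open Finset

noncomputable def chi (a : ZMod 2) : ℝ := if a = 0 then 1 else -1

lemma zmod2_cases : ∀ a : ZMod 2, a = 0 ∨ a = 1 := by decide

lemma chi_add (a b : ZMod 2) : chi (a + b) = chi a * chi b := by
  have h11 : (1 : ZMod 2) + 1 = 0 := by decide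
  have h10 : (1 : ZMod 2) ≠ 0 := by decide
  rcases zmod2_cases a with ha | ha <;> rcases zmod2_cases b with hb | hb <;>
    subst ha <;> subst hb <;> simp only [h11, add_zero, zero_add] <;> norm_num [chi, h10]

lemma chi_sum {ι : Type*} (s : Finset ι) (g : ι → ZMod 2) :
    chi (∑ i ∈ s, g i) = ∏ i ∈ s, chi (g i) := by
  induction s using Finset.cons_induction with
  | empty => simp [chi]
  | cons i s hi ih => rw [Finset.sum_cons, Finset.prod_cons, chi_add, ih]

lemma sum_chi_zmod2 (c : ZMod 2) :
    ∑ a : ZMod 2, chi (a * c) = if c = 0 then 2 else 0 := by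
  rcases zmod2_cases c with hc | hc <;> subst hc <;>
    · rw [show (Finset.univ : Finset (ZMod 2)) = {0, 1} by decide]
      norm_num [chi]

lemma char_sum (n : ℕ) (v : Fin n → ZMod 2) :
    ∑ x : Fin n → ZMod 2, chi (dotProduct x v)
      = if v = 0 then (2 : ℝ) ^ n else 0 := by
  have h1 : ∀ x : Fin n → ZMod 2, chi (dotProduct x v) = ∏ i, chi (x i * v i) :=
    fun x => chi_sum _ _
  rw [Finset.sum_congr rfl fun x _ => h1 x]
  rw [← Fintype.piFinset_univ,
    ← Finset.prod_univ_sum (fun _ : Fin n => (Finset.univ : Finset (ZMod 2)))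
      (fun i a => chi (a * v i))]
  have h2 : ∀ i, ∑ a : ZMod 2, chi (a * v i) = if v i = 0 then (2:ℝ) else 0 :=
    fun i => sum_chi_zmod2 _
  rw [Finset.prod_congr rfl fun i _ => h2 i]
  by_cases hv : v = 0
  · subst hv; simp
  · rw [if_neg hv]
    obtain ⟨i, hi⟩ := Function.ne_iff.mp hv
    have hi' : v i ≠ 0 := by simpa using hi
    exact Finset.prod_eq_zero (Finset.mem_univ i) (by simp [hi'])

lemma fiber_card_le (n : ℕ) (A : Matrix (Fin n) (Fin n) (ZMod 2)) (w : Fin n → ZMod 2) :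
    (Finset.univ.filter fun z : Fin n → ZMod 2 => A.mulVec z = w).card
      ≤ (Finset.univ.filter fun z : Fin n → ZMod 2 => A.mulVec z = 0).card := by
  rcases (Finset.univ.filter fun z : Fin n → ZMod 2 => A.mulVec z = w).eq_empty_or_nonempty
    with h | ⟨z₀, hz₀⟩
  · simp [h]
  · simp only [Finset.mem_filter, Finset.mem_univ, true_and] at hz₀
    apply Finset.card_le_card_of_injOn (fun z => z - z₀)
    · intro z hz
      simp only [Finset.coe_filter, Finset.mem_filter, Finset.mem_univ, true_and, Set.mem_setOf_eq] at hz ⊢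
      rw [Matrix.mulVec_sub, hz, hz₀, sub_self]
    · intro a _ b _ hab
      simpa using sub_left_injective hab

lemma kernel_card (n : ℕ) (A : Matrix (Fin n) (Fin n) (ZMod 2)) :
    (Finset.univ.filter fun z : Fin n → ZMod 2 => A.mulVec z = 0).card
      = 2 ^ (n - A.rank) := by
  classical
  have h1 : (Finset.univ.filter fun z : Fin n → ZMod 2 => A.mulVec z = 0).card
      = Fintype.card (LinearMap.ker A.mulVecLin) := by
    rw [Fintype.card_subtype]
    congr 1
    ext z
    simp [LinearMap.mem_ker, Matrix.mulVecLin_apply]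
  rw [h1, Module.card_eq_pow_finrank (K := ZMod 2), ZMod.card]
  congr 1
  have h2 := LinearMap.finrank_range_add_finrank_ker A.mulVecLin
  have h3 : A.rank = Module.finrank (ZMod 2) (LinearMap.range A.mulVecLin) := rfl
  rw [Module.finrank_pi (ZMod 2), Fintype.card_fin] at h2
  omega

/-- Discrepancy bound for bilinear forms: for `f(x,y) = xᵀAy` and a rectangle
`r(x,y) = ρ₁(x) ∧ ρ₂(y)` whose partition separates the `x`-variables from the
`y`-variables, `Disc(f, r) ≤ 2^{−rank(A)/2}`. -/
theorem bilinear_discrepancy (n : ℕ) (A : Matrix (Fin n) (Fin n) (ZMod 2))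
    (ρ₁ ρ₂ : (Fin n → ZMod 2) → Bool) :
    |((Finset.univ.filter fun p : (Fin n → ZMod 2) × (Fin n → ZMod 2) =>
          ρ₁ p.1 = true ∧ ρ₂ p.2 = true ∧ dotProduct p.1 (A.mulVec p.2) = 1).card : ℝ) -
        ((Finset.univ.filter fun p : (Fin n → ZMod 2) × (Fin n → ZMod 2) =>
          ρ₁ p.1 = true ∧ ρ₂ p.2 = true ∧ dotProduct p.1 (A.mulVec p.2) = 0).card : ℝ)|
      / 2 ^ (2 * n) ≤ (2 : ℝ) ^ (-(A.rank : ℝ) / 2) := by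
  classical
  set r := A.rank with hr_def
  have hrn : r ≤ n := A.rank_le_width
  set I₁ : (Fin n → ZMod 2) → ℝ := fun x => if ρ₁ x then 1 else 0 with hI₁
  set I₂ : (Fin n → ZMod 2) → ℝ := fun y => if ρ₂ y then 1 else 0 with hI₂
  set T : (Fin n → ZMod 2) → ℝ :=
    fun x => ∑ y, I₂ y * chi (dotProduct x (A.mulVec y)) with hT
  set S : ℝ := ∑ x, I₁ x * T x with hS
  -- Step 1: the numerator equals |S|
  have step1 :
      |((Finset.univ.filter fun p : (Fin n → ZMod 2) × (Fin n → ZMod 2) =>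
          ρ₁ p.1 = true ∧ ρ₂ p.2 = true ∧ dotProduct p.1 (A.mulVec p.2) = 1).card : ℝ) -
        ((Finset.univ.filter fun p : (Fin n → ZMod 2) × (Fin n → ZMod 2) =>
          ρ₁ p.1 = true ∧ ρ₂ p.2 = true ∧ dotProduct p.1 (A.mulVec p.2) = 0).card : ℝ)|
        = |S| := by
    have hSsum : S = ∑ p : (Fin n → ZMod 2) × (Fin n → ZMod 2),
        I₁ p.1 * I₂ p.2 * chi (dotProduct p.1 (A.mulVec p.2)) := by
      rw [hS, Fintype.sum_prod_type]
      refine Finset.sum_congr rfl fun x _ => ?_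
      rw [hT, Finset.mul_sum]
      exact Finset.sum_congr rfl fun y _ => by ring
    have key : ((Finset.univ.filter fun p : (Fin n → ZMod 2) × (Fin n → ZMod 2) =>
          ρ₁ p.1 = true ∧ ρ₂ p.2 = true ∧ dotProduct p.1 (A.mulVec p.2) = 0).card : ℝ) -
        ((Finset.univ.filter fun p : (Fin n → ZMod 2) × (Fin n → ZMod 2) =>
          ρ₁ p.1 = true ∧ ρ₂ p.2 = true ∧ dotProduct p.1 (A.mulVec p.2) = 1).card : ℝ)
        = S := by
      rw [hSsum, Finset.card_filter, Finset.card_filter]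
      push_cast
      rw [← Finset.sum_sub_distrib]
      refine Finset.sum_congr rfl fun p _ => ?_
      rcases zmod2_cases (dotProduct p.1 (A.mulVec p.2)) with hf | hf <;>
        by_cases h1 : ρ₁ p.1 <;> by_cases h2 : ρ₂ p.2 <;>
        simp [hf, h1, h2, chi, hI₁, hI₂]
    rw [← key, abs_sub_comm]
  rw [step1]
  -- bound on indicator sum
  have hI₁sq : ∑ x : Fin n → ZMod 2, I₁ x ^ 2 ≤ (2:ℝ) ^ n := by
    calc ∑ x : Fin n → ZMod 2, I₁ x ^ 2 ≤ ∑ _x : Fin n → ZMod 2, (1:ℝ) := by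
          refine Finset.sum_le_sum fun x _ => ?_
          by_cases h : ρ₁ x <;> simp [hI₁, h]
      _ = (2:ℝ) ^ n := by
          rw [Finset.sum_const, Finset.card_univ]
          simp [ZMod.card]
  -- bound on sum of T²
  have hTsq : ∑ x : Fin n → ZMod 2, T x ^ 2 ≤ (2:ℝ) ^ n * ((2:ℝ) ^ n * (2:ℝ) ^ (n - r)) := by
    have expand : ∑ x : Fin n → ZMod 2, T x ^ 2
        = ∑ y : Fin n → ZMod 2, ∑ y' : Fin n → ZMod 2, I₂ y * I₂ y' *
            (if A.mulVec y + A.mulVec y' = 0 then (2:ℝ) ^ n else 0) := by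
      have hx : ∀ x, T x ^ 2 = ∑ y : Fin n → ZMod 2, ∑ y' : Fin n → ZMod 2,
          I₂ y * I₂ y' * chi (dotProduct x (A.mulVec y + A.mulVec y')) := by
        intro x
        rw [sq, hT, Finset.sum_mul_sum]
        refine Finset.sum_congr rfl fun y _ => Finset.sum_congr rfl fun y' _ => ?_
        rw [dotProduct_add, chi_add]
        ring
      rw [Finset.sum_congr rfl fun x _ => hx x, Finset.sum_comm]
      refine Finset.sum_congr rfl fun y _ => ?_
      rw [Finset.sum_comm]
      refine Finset.sum_congr rfl fun y' _ => ?_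
      rw [← Finset.mul_sum, char_sum]
    rw [expand]
    have bound1 : ∀ y y' : Fin n → ZMod 2, I₂ y * I₂ y' *
        (if A.mulVec y + A.mulVec y' = 0 then (2:ℝ) ^ n else 0)
        ≤ (if A.mulVec y + A.mulVec y' = 0 then (2:ℝ) ^ n else 0) := by
      intro y y'
      have h2 : (0:ℝ) ≤ if A.mulVec y + A.mulVec y' = 0 then (2:ℝ) ^ n else 0 := by
        split <;> positivity
      have hle : I₂ y * I₂ y' ≤ 1 := by
        by_cases h : ρ₂ y <;> by_cases h' : ρ₂ y' <;> simp [hI₂, h, h']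
      have hnn : 0 ≤ I₂ y * I₂ y' := by
        by_cases h : ρ₂ y <;> by_cases h' : ρ₂ y' <;> simp [hI₂, h, h']
      nlinarith
    calc ∑ y : Fin n → ZMod 2, ∑ y' : Fin n → ZMod 2, I₂ y * I₂ y' *
            (if A.mulVec y + A.mulVec y' = 0 then (2:ℝ) ^ n else 0)
        ≤ ∑ y : Fin n → ZMod 2, ∑ y' : Fin n → ZMod 2,
            (if A.mulVec y + A.mulVec y' = 0 then (2:ℝ) ^ n else 0) :=
          Finset.sum_le_sum fun y _ => Finset.sum_le_sum fun y' _ => bound1 y y'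
      _ ≤ ∑ _y : Fin n → ZMod 2, ((2:ℝ) ^ (n - r) * (2:ℝ) ^ n) := by
          refine Finset.sum_le_sum fun y _ => ?_
          have hcong : (Finset.univ.filter fun y' : Fin n → ZMod 2 =>
              A.mulVec y + A.mulVec y' = 0)
              = Finset.univ.filter fun y' : Fin n → ZMod 2 =>
                  A.mulVec y' = -(A.mulVec y) := by
            refine Finset.filter_congr fun y' _ => ?_
            constructor
            · intro h; exact eq_neg_of_add_eq_zero_right h
            · intro h; rw [h]; exact add_neg_cancel _
          have heq : ∑ y' : Fin n → ZMod 2,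
              (if A.mulVec y + A.mulVec y' = 0 then (2:ℝ) ^ n else 0)
              = ((Finset.univ.filter fun y' : Fin n → ZMod 2 =>
                  A.mulVec y' = -(A.mulVec y)).card : ℝ) * (2:ℝ) ^ n := by
            rw [← Finset.sum_filter, hcong, Finset.sum_const, nsmul_eq_mul]
          rw [heq]
          have hcard : ((Finset.univ.filter fun y' : Fin n → ZMod 2 =>
              A.mulVec y' = -(A.mulVec y)).card : ℝ) ≤ (2:ℝ) ^ (n - r) := by
            have := (fiber_card_le n A (-(A.mulVec y))).trans_eq (kernel_card n A)
            rw [← hr_def] at this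
            calc ((Finset.univ.filter fun y' : Fin n → ZMod 2 =>
                A.mulVec y' = -(A.mulVec y)).card : ℝ) ≤ ((2 ^ (n - r) : ℕ) : ℝ) := by
                  exact_mod_cast this
              _ = (2:ℝ) ^ (n - r) := by push_cast; ring
          exact mul_le_mul_of_nonneg_right hcard (by positivity)
      _ = (2:ℝ) ^ n * ((2:ℝ) ^ n * (2:ℝ) ^ (n - r)) := by
          rw [Finset.sum_const, Finset.card_univ]
          simp only [Fintype.card_pi, ZMod.card, Finset.prod_const, Finset.card_univ,
            Fintype.card_fin, nsmul_eq_mul]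
          push_cast
          ring
  -- Cauchy–Schwarz
  have hTnn : (0:ℝ) ≤ ∑ x : Fin n → ZMod 2, T x ^ 2 :=
    Finset.sum_nonneg fun x _ => sq_nonneg _
  have hSsq : S ^ 2 ≤ (2:ℝ) ^ (3 * n + (n - r)) := by
    calc S ^ 2 ≤ (∑ x : Fin n → ZMod 2, I₁ x ^ 2) * ∑ x : Fin n → ZMod 2, T x ^ 2 :=
          Finset.sum_mul_sq_le_sq_mul_sq _ _ _
      _ ≤ (2:ℝ) ^ n * ((2:ℝ) ^ n * ((2:ℝ) ^ n * (2:ℝ) ^ (n - r))) := by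
          apply mul_le_mul hI₁sq hTsq hTnn (by positivity)
      _ = (2:ℝ) ^ (3 * n + (n - r)) := by
          rw [← pow_add, ← pow_add, ← pow_add]
          congr 1
          ring
  -- final arithmetic
  set B : ℝ := (2:ℝ) ^ (-(r:ℝ) / 2) * 2 ^ (2 * n) with hB
  have hBpos : 0 < B := by positivity
  have hB2 : B ^ 2 = (2:ℝ) ^ (3 * n + (n - r)) := by
    rw [hB, mul_pow, ← pow_mul, ← Real.rpow_natCast ((2:ℝ) ^ (-(r:ℝ)/2)) 2,
      ← Real.rpow_mul (by norm_num), ← Real.rpow_natCast (2:ℝ) (2 * n * 2),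
      ← Real.rpow_add (by norm_num), ← Real.rpow_natCast (2:ℝ) (3 * n + (n - r))]
    congr 1
    have : ((n - r : ℕ) : ℝ) = (n:ℝ) - (r:ℝ) := Nat.cast_sub hrn
    push_cast [this]
    ring
  have habs : |S| ≤ B := by
    have h1 : S ^ 2 ≤ B ^ 2 := by rw [hB2]; exact hSsq
    calc |S| = Real.sqrt (S ^ 2) := (Real.sqrt_sq_eq_abs S).symm
      _ ≤ Real.sqrt (B ^ 2) := Real.sqrt_le_sqrt h1
      _ = B := Real.sqrt_sq hBpos.le
  rw [div_le_iff₀ (by positivity)]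
  exact habs
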